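/- arXiv:1609.08953 — 3 statements merged into one kernel-verified Lean document; each statement's English description precedes it below -/
import Mathlib

section
/- Let G be a finite graph with a 2-coloring c of its vertices, let U be the set of unstable vertices (those for which strictly more than half of their neighbors have the other color), and let p : V → [0,1]. Let S_1, S_2 denote the non-conflicting edges with exactly one, respectively two, unstable endpoints, and C_1, C_2 the conflicting edges with exactly one, respectively two, unstable endpoints (for edges in S_1 and C_1 write u for the unstable endpoint). Then Σ_{u∈U} p_u + Σ_{uv∈S_1} p_u + Σ_{uv∈S_2}(p_u + p_v) ≤ Σ_{uv∈C_1} p_u + Σ_{uv∈C_2}(p_u + p_v). -/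
open Finset

/-- For a finite 2-colored graph with unstable vertices `U`
(strict majority of neighbors of the other color) and activation probabilities `p`,
the sum over non-conflicting edges of the probabilities of their unstable endpoints
plus `∑_{u ∈ U} p u` is at most the corresponding sum over conflicting edges.
Edge sums are written as sums over unstable vertices and their neighbors: an edge with
two unstable endpoints is thus counted from both sides, contributing `p u + p v`. -/
theorem stmt5 {V : Type*} [Fintype V] [DecidableEq V]
    (G : SimpleGraph V) [DecidableRel G.Adj]
    (c : V → Bool) (p : V → ℝ) (hp : ∀ u, 0 ≤ p u ∧ p u ≤ 1)
    (unstable : V → Prop) [DecidablePred unstable]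
    (hunstable : ∀ u, unstable u ↔
      G.degree u < 2 * ((G.neighborFinset u).filter (fun v => c v ≠ c u)).card)
    (U : Finset V) (hU : U = Finset.univ.filter unstable) :
    -- ∑_{u∈U} p_u + ∑_{uv∈S₁} p_u + ∑_{uv∈S₂} (p_u + p_v)
    (∑ u ∈ U, p u)
      + (∑ u ∈ U, ∑ v ∈ (G.neighborFinset u).filter (fun v => c v = c u ∧ ¬ unstable v), p u)
      + (∑ u ∈ U, ∑ v ∈ (G.neighborFinset u).filter (fun v => c v = c u ∧ unstable v), p u)
    ≤ -- ∑_{uv∈C₁} p_u + ∑_{uv∈C₂} (p_u + p_v)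
      (∑ u ∈ U, ∑ v ∈ (G.neighborFinset u).filter (fun v => c v ≠ c u ∧ ¬ unstable v), p u)
      + (∑ u ∈ U, ∑ v ∈ (G.neighborFinset u).filter (fun v => c v ≠ c u ∧ unstable v), p u) := by
  rw [← Finset.sum_add_distrib, ← Finset.sum_add_distrib, ← Finset.sum_add_distrib]
  apply Finset.sum_le_sum
  intro u hu
  have hup : unstable u := by
    rw [hU, Finset.mem_filter] at hu; exact hu.2
  simp only [Finset.sum_const, nsmul_eq_mul]
  set N := G.neighborFinset u
  -- splitting by unstable
  have hsplit : ∀ P : V → Prop, ∀ _ : DecidablePred P,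
      ((N.filter (fun v => P v ∧ ¬ unstable v)).card
        + (N.filter (fun v => P v ∧ unstable v)).card) = (N.filter P).card := by
    intro P _
    have h1 : N.filter (fun v => P v ∧ ¬ unstable v)
        = (N.filter P).filter (fun v => ¬ unstable v) := by
      rw [Finset.filter_filter]
    have h2 : N.filter (fun v => P v ∧ unstable v)
        = (N.filter P).filter (fun v => unstable v) := by
      rw [Finset.filter_filter]
    rw [h1, h2, add_comm, Finset.card_filter_add_card_filter_not]
  have hsame := hsplit (fun v => c v = c u) inferInstance
  have hdiff := hsplit (fun v => c v ≠ c u) inferInstance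
  have hdeg : (N.filter (fun v => c v = c u)).card
      + (N.filter (fun v => c v ≠ c u)).card = G.degree u :=
    Finset.card_filter_add_card_filter_not (fun v => c v = c u)
  have hlt : (N.filter (fun v => c v = c u)).card + 1
      ≤ (N.filter (fun v => c v ≠ c u)).card := by
    have h' : G.degree u < 2 * (N.filter (fun v => c v ≠ c u)).card :=
      (hunstable u).mp hup
    omega
  have hp0 := (hp u).1
  have hnat : (1 : ℝ) + (N.filter (fun v => c v = c u ∧ ¬ unstable v)).card
      + (N.filter (fun v => c v = c u ∧ unstable v)).card
      ≤ (N.filter (fun v => c v ≠ c u ∧ ¬ unstable v)).card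
      + (N.filter (fun v => c v ≠ c u ∧ unstable v)).card := by
    push_cast
    have : (1 : ℝ) + ((N.filter (fun v => c v = c u ∧ ¬ unstable v)).card
        + (N.filter (fun v => c v = c u ∧ unstable v)).card : ℕ)
        ≤ ((N.filter (fun v => c v ≠ c u ∧ ¬ unstable v)).card
        + (N.filter (fun v => c v ≠ c u ∧ unstable v)).card : ℕ) := by
      rw [hsame, hdiff]
      exact_mod_cast (by omega : 1 + (N.filter (fun v => c v = c u)).card
        ≤ (N.filter (fun v => c v ≠ c u)).card)
    push_cast at this
    linarith
  nlinarith [hnat, hp0]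
end

section
/- Under the hypotheses of the preceding summation inequality, if the expected change of the number of conflicting edges in one step is E[ΔC] = Σ_{uv∈S_1} p_u + Σ_{uv∈S_2} p_{uv} - Σ_{uv∈C_1} p_u - Σ_{uv∈C_2} p_{uv} with p_{uv} = p_u + p_v - 2 p_u p_v, then E[ΔC] ≤ Σ_{uv∈C_2} 2 p_u p_v - Σ_{u∈U} p_u. -/
open Finset

lemma swap_sum {V : Type*} [Fintype V] [DecidableEq V]
    (G : SimpleGraph V) [DecidableRel G.Adj]
    (P : V → Prop) [DecidablePred P]
    (R : V → V → Prop) [DecidableRel R] (hR : ∀ u v, R u v → R v u)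
    (p : V → ℝ) :
    ∑ u ∈ univ.filter P, ∑ v ∈ (G.neighborFinset u).filter (fun v => R u v ∧ P v), p v
  = ∑ u ∈ univ.filter P, ∑ v ∈ (G.neighborFinset u).filter (fun v => R u v ∧ P v), p u := by
  rw [Finset.sum_sigma', Finset.sum_sigma']
  refine Finset.sum_nbij' (fun x => ⟨x.2, x.1⟩) (fun x => ⟨x.2, x.1⟩) ?_ ?_ ?_ ?_ ?_
  · rintro ⟨u, v⟩ hx
    simp only [Finset.mem_sigma, Finset.mem_filter, Finset.mem_univ, true_and,
      SimpleGraph.mem_neighborFinset] at hx ⊢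
    exact ⟨hx.2.2.2, hx.2.1.symm, hR _ _ hx.2.2.1, hx.1⟩
  · rintro ⟨u, v⟩ hx
    simp only [Finset.mem_sigma, Finset.mem_filter, Finset.mem_univ, true_and,
      SimpleGraph.mem_neighborFinset] at hx ⊢
    exact ⟨hx.2.2.2, hx.2.1.symm, hR _ _ hx.2.2.1, hx.1⟩
  · rintro ⟨u, v⟩ _; rfl
  · rintro ⟨u, v⟩ _; rfl
  · rintro ⟨u, v⟩ _; rfl

/-- In the same setting as the summation inequality (finite 2-colored
graph, unstable vertices `U`, activation probabilities `p : V → [0,1]`), the expected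
change of the number of conflicting edges
`E[ΔC] = ∑_{uv∈S₁} p_u + ∑_{uv∈S₂} p_{uv} − ∑_{uv∈C₁} p_u − ∑_{uv∈C₂} p_{uv}`
with `p_{uv} = p_u + p_v − 2 p_u p_v` satisfies
`E[ΔC] ≤ ∑_{uv∈C₂} 2 p_u p_v − ∑_{u∈U} p_u`.
Sums over edges with two unstable endpoints are written as half the corresponding sum
over ordered pairs (each such edge is seen from both endpoints);
in particular `∑_{uv∈C₂} 2 p_u p_v` is the ordered-pair sum of `p u * p v`. -/
theorem stmt6 {V : Type*} [Fintype V] [DecidableEq V]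
    (G : SimpleGraph V) [DecidableRel G.Adj]
    (c : V → Bool) (p : V → ℝ) (hp : ∀ u, 0 ≤ p u ∧ p u ≤ 1)
    (unstable : V → Prop) [DecidablePred unstable]
    (hunstable : ∀ u, unstable u ↔
      G.degree u < 2 * ((G.neighborFinset u).filter (fun v => c v ≠ c u)).card)
    (U : Finset V) (hU : U = Finset.univ.filter unstable)
    (EΔC : ℝ)
    (hEΔC : EΔC =
      (∑ u ∈ U, ∑ v ∈ (G.neighborFinset u).filter (fun v => c v = c u ∧ ¬ unstable v), p u)
      + (1 / 2) * (∑ u ∈ U, ∑ v ∈ (G.neighborFinset u).filter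
          (fun v => c v = c u ∧ unstable v), (p u + p v - 2 * p u * p v))
      - (∑ u ∈ U, ∑ v ∈ (G.neighborFinset u).filter (fun v => c v ≠ c u ∧ ¬ unstable v), p u)
      - (1 / 2) * (∑ u ∈ U, ∑ v ∈ (G.neighborFinset u).filter
          (fun v => c v ≠ c u ∧ unstable v), (p u + p v - 2 * p u * p v))) :
    EΔC ≤
      (∑ u ∈ U, ∑ v ∈ (G.neighborFinset u).filter (fun v => c v ≠ c u ∧ unstable v),
        p u * p v)
      - ∑ u ∈ U, p u := by
  subst hU hEΔC
  have hswapS := swap_sum G unstable (fun u v => c v = c u)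
    (fun u v h => h.symm) p
  have hswapC := swap_sum G unstable (fun u v => c v ≠ c u)
    (fun u v h => fun e => h e.symm) p
  -- expand the p_{uv} sums
  have expand : ∀ (Q : V → V → Prop) [DecidableRel Q],
      ∑ u ∈ univ.filter unstable, ∑ v ∈ (G.neighborFinset u).filter
        (fun v => Q u v ∧ unstable v), (p u + p v - 2 * p u * p v)
      = (∑ u ∈ univ.filter unstable, ∑ v ∈ (G.neighborFinset u).filter
          (fun v => Q u v ∧ unstable v), p u)
        + (∑ u ∈ univ.filter unstable, ∑ v ∈ (G.neighborFinset u).filter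
          (fun v => Q u v ∧ unstable v), p v)
        - 2 * ∑ u ∈ univ.filter unstable, ∑ v ∈ (G.neighborFinset u).filter
          (fun v => Q u v ∧ unstable v), p u * p v := by
    intro Q _
    have inner : ∀ u, ∑ v ∈ (G.neighborFinset u).filter (fun v => Q u v ∧ unstable v),
        (p u + p v - 2 * p u * p v)
        = (∑ v ∈ (G.neighborFinset u).filter (fun v => Q u v ∧ unstable v), p u)
        + (∑ v ∈ (G.neighborFinset u).filter (fun v => Q u v ∧ unstable v), p v)
        - 2 * ∑ v ∈ (G.neighborFinset u).filter (fun v => Q u v ∧ unstable v), p u * p v := by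
      intro u
      simp only [mul_assoc]
      rw [Finset.sum_sub_distrib, Finset.sum_add_distrib, ← Finset.mul_sum]
    rw [Finset.sum_congr rfl (fun u _ => inner u), Finset.sum_sub_distrib,
      Finset.sum_add_distrib, ← Finset.mul_sum]
  rw [expand (fun u v => c v = c u), expand (fun u v => c v ≠ c u), hswapS, hswapC]
  have hppnn : (0:ℝ) ≤ ∑ u ∈ univ.filter unstable, ∑ v ∈ (G.neighborFinset u).filter
      (fun v => c v = c u ∧ unstable v), p u * p v := by
    apply Finset.sum_nonneg; intro u _
    apply Finset.sum_nonneg; intro v _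
    exact mul_nonneg (hp u).1 (hp v).1
  have key : ∑ u ∈ univ.filter unstable, p u
      + (∑ u ∈ univ.filter unstable, ∑ v ∈ (G.neighborFinset u).filter
          (fun v => c v = c u ∧ ¬ unstable v), p u)
      + (∑ u ∈ univ.filter unstable, ∑ v ∈ (G.neighborFinset u).filter
          (fun v => c v = c u ∧ unstable v), p u)
      ≤ (∑ u ∈ univ.filter unstable, ∑ v ∈ (G.neighborFinset u).filter
          (fun v => c v ≠ c u ∧ ¬ unstable v), p u)
      + (∑ u ∈ univ.filter unstable, ∑ v ∈ (G.neighborFinset u).filter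
          (fun v => c v ≠ c u ∧ unstable v), p u) := by
    rw [← Finset.sum_add_distrib, ← Finset.sum_add_distrib, ← Finset.sum_add_distrib]
    apply Finset.sum_le_sum
    intro u hu
    rw [Finset.mem_filter] at hu
    have hdeg := (hunstable u).mp hu.2
    rw [Finset.sum_const, Finset.sum_const, Finset.sum_const, Finset.sum_const,
      nsmul_eq_mul, nsmul_eq_mul, nsmul_eq_mul, nsmul_eq_mul]
    have hsplit : ∀ (Q : V → Prop) [DecidablePred Q],
        ((G.neighborFinset u).filter (fun v => Q v ∧ ¬ unstable v)).card
        + ((G.neighborFinset u).filter (fun v => Q v ∧ unstable v)).card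
        = ((G.neighborFinset u).filter Q).card := by
      intro Q _
      rw [← Finset.filter_filter, ← Finset.filter_filter]
      rw [add_comm]
      exact Finset.card_filter_add_card_filter_not (fun v => unstable v)
    have hdegsplit : ((G.neighborFinset u).filter (fun v => c v = c u)).card
        + ((G.neighborFinset u).filter (fun v => c v ≠ c u)).card = G.degree u := by
      rw [SimpleGraph.degree]
      exact Finset.card_filter_add_card_filter_not (fun v => c v = c u)
    have hcard : ((G.neighborFinset u).filter (fun v => c v = c u)).card + 1
        ≤ ((G.neighborFinset u).filter (fun v => c v ≠ c u)).card := by omega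
    have h1 := hsplit (fun v => c v = c u)
    have h2 := hsplit (fun v => c v ≠ c u)
    have hpnn := (hp u).1
    have hn : (1 : ℕ) + ((G.neighborFinset u).filter (fun v => c v = c u ∧ ¬ unstable v)).card
        + ((G.neighborFinset u).filter (fun v => c v = c u ∧ unstable v)).card
        ≤ ((G.neighborFinset u).filter (fun v => c v ≠ c u ∧ ¬ unstable v)).card
        + ((G.neighborFinset u).filter (fun v => c v ≠ c u ∧ unstable v)).card := by omega
    have hr : ((1 : ℕ) + ((G.neighborFinset u).filter (fun v => c v = c u ∧ ¬ unstable v)).card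
        + ((G.neighborFinset u).filter (fun v => c v = c u ∧ unstable v)).card : ℝ)
        ≤ (((G.neighborFinset u).filter (fun v => c v ≠ c u ∧ ¬ unstable v)).card
        + (((G.neighborFinset u).filter (fun v => c v ≠ c u ∧ unstable v)).card : ℝ)) := by
      exact_mod_cast Nat.cast_le.mpr hn
    push_cast at hr
    nlinarith [hr, hpnn]
  nlinarith [key, hppnn]
end

section
/- Let G be a finite graph with 2-coloring, U the set of unstable vertices (nonempty), C_2 the set of conflicting edges with both endpoints unstable, and p : V → [0,1] with p_u ≥ p/Δ and p_u ≤ q/Δ_u for all u, where Δ is the maximum degree, Δ_u = max over neighbors v of u of deg(v), and p, q ∈ (0,1). Then Σ_{u∈U} p_u (−1 + Σ_{v : uv∈C_2} p_v) ≤ −p(1−q)|U|/Δ. -/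
open Finset

/-- Finite 2-colored graph, `U` the (nonempty) set of unstable vertices,
`p_u ∈ [p/Δ, q/Δ_u]` with `Δ` the maximum degree and `Δ_u` the maximum degree among
the neighbors of `u`, and `p, q ∈ (0,1)`. Then
`∑_{u∈U} p_u (−1 + ∑_{v : uv ∈ C₂} p_v) ≤ −p(1−q)|U|/Δ`,
where `C₂` is the set of conflicting edges with both endpoints unstable. -/
theorem stmt7 {V : Type*} [Fintype V] [DecidableEq V]
    (G : SimpleGraph V) [DecidableRel G.Adj]
    (c : V → Bool)
    (unstable : V → Prop) [DecidablePred unstable]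
    (hunstable : ∀ u, unstable u ↔
      G.degree u < 2 * ((G.neighborFinset u).filter (fun v => c v ≠ c u)).card)
    (U : Finset V) (hU : U = Finset.univ.filter unstable) (hUne : U.Nonempty)
    (p q : ℝ) (hp : p ∈ Set.Ioo (0 : ℝ) 1) (hq : q ∈ Set.Ioo (0 : ℝ) 1)
    (pr : V → ℝ) (hpr : ∀ u, pr u ∈ Set.Icc (0 : ℝ) 1)
    (hlow : ∀ u, p / (G.maxDegree : ℝ) ≤ pr u)
    (hhigh : ∀ u, pr u ≤ q / (((G.neighborFinset u).sup fun v => G.degree v : ℕ) : ℝ)) :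
    ∑ u ∈ U, pr u * (-1 + ∑ v ∈ (G.neighborFinset u).filter
        (fun v => c v ≠ c u ∧ unstable v), pr v)
      ≤ -(p * (1 - q) * (U.card : ℝ) / (G.maxDegree : ℝ)) := by
  -- every unstable vertex has positive degree
  have hdegpos : ∀ u, unstable u → 0 < G.degree u := by
    intro u hu
    have h := (hunstable u).mp hu
    have hle : ((G.neighborFinset u).filter (fun v => c v ≠ c u)).card ≤ G.degree u := by
      rw [← G.card_neighborFinset_eq_degree]
      exact Finset.card_filter_le _ _
    omega
  -- maxDegree is positive
  obtain ⟨u0, hu0⟩ := hUne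
  have hu0' : unstable u0 := by
    rw [hU] at hu0; exact (Finset.mem_filter.mp hu0).2
  have hΔpos : 0 < G.maxDegree :=
    lt_of_lt_of_le (hdegpos u0 hu0') (G.degree_le_maxDegree u0)
  have hΔpos' : (0 : ℝ) < (G.maxDegree : ℝ) := by exact_mod_cast hΔpos
  -- pointwise bound
  have key : ∀ u ∈ U, pr u * (-1 + ∑ v ∈ (G.neighborFinset u).filter
        (fun v => c v ≠ c u ∧ unstable v), pr v) ≤ -(p * (1 - q) / (G.maxDegree : ℝ)) := by
    intro u hu
    have hu' : unstable u := by rw [hU] at hu; exact (Finset.mem_filter.mp hu).2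
    have hdu : 0 < G.degree u := hdegpos u hu'
    have hdu' : (0 : ℝ) < (G.degree u : ℝ) := by exact_mod_cast hdu
    -- each neighbor v in the filtered set satisfies pr v ≤ q / deg u
    have hS : ∑ v ∈ (G.neighborFinset u).filter (fun v => c v ≠ c u ∧ unstable v), pr v
        ≤ q := by
      have hbd : ∀ v ∈ (G.neighborFinset u).filter (fun v => c v ≠ c u ∧ unstable v),
          pr v ≤ q / (G.degree u : ℝ) := by
        intro v hv
        have hadj : G.Adj u v := by
          have := (Finset.mem_filter.mp hv).1
          exact (SimpleGraph.mem_neighborFinset G u v).mp this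
        have hmem : u ∈ G.neighborFinset v :=
          (SimpleGraph.mem_neighborFinset G v u).mpr hadj.symm
        have hsup : G.degree u ≤ (G.neighborFinset v).sup fun w => G.degree w :=
          Finset.le_sup (f := fun w => G.degree w) hmem
        have hsup' : (G.degree u : ℝ) ≤ (((G.neighborFinset v).sup fun w => G.degree w : ℕ) : ℝ) := by
          exact_mod_cast hsup
        calc pr v ≤ q / (((G.neighborFinset v).sup fun w => G.degree w : ℕ) : ℝ) := hhigh v
          _ ≤ q / (G.degree u : ℝ) := by
              apply div_le_div_of_nonneg_left hq.1.le hdu' hsup'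
      calc ∑ v ∈ (G.neighborFinset u).filter (fun v => c v ≠ c u ∧ unstable v), pr v
          ≤ ∑ _v ∈ (G.neighborFinset u).filter (fun v => c v ≠ c u ∧ unstable v),
              (q / (G.degree u : ℝ)) := Finset.sum_le_sum hbd
        _ = ((G.neighborFinset u).filter (fun v => c v ≠ c u ∧ unstable v)).card
              * (q / (G.degree u : ℝ)) := by rw [Finset.sum_const, nsmul_eq_mul]
        _ ≤ (G.degree u : ℝ) * (q / (G.degree u : ℝ)) := by
            apply mul_le_mul_of_nonneg_right _ (div_nonneg hq.1.le hdu'.le)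
            have : ((G.neighborFinset u).filter (fun v => c v ≠ c u ∧ unstable v)).card
                ≤ G.degree u := by
              rw [← G.card_neighborFinset_eq_degree]
              exact Finset.card_filter_le _ _
            exact_mod_cast this
        _ = q := by field_simp
    have hpru0 : 0 ≤ pr u := (hpr u).1
    have hprul : p / (G.maxDegree : ℝ) ≤ pr u := hlow u
    have h1 : pr u * (-1 + ∑ v ∈ (G.neighborFinset u).filter
        (fun v => c v ≠ c u ∧ unstable v), pr v) ≤ pr u * (-(1 - q)) := by
      apply mul_le_mul_of_nonneg_left _ hpru0
      linarith
    have h2 : pr u * (-(1 - q)) ≤ (p / (G.maxDegree : ℝ)) * (-(1 - q)) := by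
      have : 0 < 1 - q := by linarith [hq.2]
      nlinarith
    calc _ ≤ pr u * (-(1 - q)) := h1
      _ ≤ (p / (G.maxDegree : ℝ)) * (-(1 - q)) := h2
      _ = -(p * (1 - q) / (G.maxDegree : ℝ)) := by ring
  calc ∑ u ∈ U, pr u * (-1 + ∑ v ∈ (G.neighborFinset u).filter
        (fun v => c v ≠ c u ∧ unstable v), pr v)
      ≤ ∑ _u ∈ U, -(p * (1 - q) / (G.maxDegree : ℝ)) := Finset.sum_le_sum key
    _ = U.card * -(p * (1 - q) / (G.maxDegree : ℝ)) := by rw [Finset.sum_const, nsmul_eq_mul]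
    _ = -(p * (1 - q) * (U.card : ℝ) / (G.maxDegree : ℝ)) := by ring
end
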